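/- arXiv:1311.4987 — 4 statements merged into one kernel-verified Lean document; each statement's English description precedes it below -/
import Mathlib

section
/- For all natural numbers n ≥ 2 and all integers L with 1 ≤ L ≤ n-2, it holds that 5n(n-L)(n-L-1) / (e·L·(n-L+1)) > 1, where e is Euler's number. -/
theorem forward_backward_ratio_gt_one (n : ℕ) (hn : 2 ≤ n) (L : ℤ)
    (hL1 : 1 ≤ L) (hL2 : L ≤ (n : ℤ) - 2) :
    5 * (n : ℝ) * ((n : ℝ) - L) * ((n : ℝ) - L - 1) /
      (Real.exp 1 * (L : ℝ) * ((n : ℝ) - L + 1)) > 1 := by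
  have hE : Real.exp 1 < 3 := by
    have := Real.exp_one_lt_d9
    linarith
  have hE0 : (0:ℝ) < Real.exp 1 := Real.exp_pos 1
  have hLr : (1:ℝ) ≤ (L:ℝ) := by exact_mod_cast hL1
  have hL2r : (L:ℝ) ≤ (n:ℝ) - 2 := by exact_mod_cast hL2
  have hden : 0 < Real.exp 1 * (L : ℝ) * ((n : ℝ) - L + 1) := by
    apply mul_pos (mul_pos hE0 (by linarith)) (by linarith)
  rw [gt_iff_lt, lt_div_iff₀ hden]
  set x : ℝ := (n:ℝ) - L with hx
  have hx2 : 2 ≤ x := by simp [hx]; linarith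
  have hnpos : (3:ℝ) ≤ (n:ℝ) := by linarith
  have step1 : Real.exp 1 * (L:ℝ) * (x + 1) < 3 * (n:ℝ) * (x + 1) := by
    have h1 : Real.exp 1 * (L:ℝ) < 3 * (n:ℝ) := by nlinarith
    nlinarith
  have step2 : 3 * (n:ℝ) * (x + 1) ≤ 5 * (n:ℝ) * x * (x - 1) := by nlinarith [sq_nonneg (x-2)]
  linarith
end

section
/- Let (ξ_t)_{t≥0} be a Markov chain on a finite state space X with target set X* and first hitting time τ. Let V : X → ℝ satisfy V(x) = 0 for x ∈ X* and V(x) > 0 for x ∉ X*. If there exist constants 0 < c_l ≤ c_u such that for every t ≥ 0 and every state x with V(x) > 0, c_l ≤ E[V(ξ_t) - V(ξ_{t+1}) | ξ_t = x] ≤ c_u, then V(ξ_0)/c_u ≤ E[τ | ξ_0] ≤ V(ξ_0)/c_l. -/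
/-- Probability that a Markov chain with (time-dependent) transition kernel `P`,
currently at time `s` in state `x`, first hits the target set `A` in exactly `t`
further steps (the target is treated as absorbing). -/
noncomputable def hitProb {X : Type*} [Fintype X] [DecidableEq X] (P : ℕ → X → X → ℝ) (A : Finset X) :
    ℕ → ℕ → X → ℝ
  | _, 0, x => if x ∈ A then 1 else 0
  | s, t + 1, x => if x ∈ A then 0 else ∑ y, P s x y * hitProb P A (s + 1) t y

/-- Expected first hitting time of the target set `A` for the chain with kernel `P`
started at `x` at time 0. -/
noncomputable def efht {X : Type*} [Fintype X] [DecidableEq X] (P : ℕ → X → X → ℝ) (A : Finset X)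
    (x : X) : ℝ :=
  ∑' t : ℕ, (t : ℝ) * hitProb P A 0 t x

noncomputable def survProb {X : Type*} [Fintype X] [DecidableEq X] (P : ℕ → X → X → ℝ)
    (A : Finset X) : ℕ → ℕ → X → ℝ
  | _, 0, x => if x ∈ A then 0 else 1
  | s, t + 1, x => if x ∈ A then 0 else ∑ y, P s x y * survProb P A (s + 1) t y

noncomputable def Wv {X : Type*} [Fintype X] [DecidableEq X] (P : ℕ → X → X → ℝ)
    (A : Finset X) (V : X → ℝ) : ℕ → ℕ → X → ℝ
  | _, 0, x => if x ∈ A then 0 else V x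
  | s, t + 1, x => if x ∈ A then 0 else ∑ y, P s x y * Wv P A V (s + 1) t y

section aux

variable {X : Type*} [Fintype X] [DecidableEq X] (P : ℕ → X → X → ℝ) (A : Finset X)
  (V : X → ℝ)

lemma sp_mem {x : X} (hx : x ∈ A) (s t : ℕ) : survProb P A s t x = 0 := by
  cases t <;> simp [survProb, hx]

lemma sp_nonneg (hnonneg : ∀ t x y, 0 ≤ P t x y) :
    ∀ t s (x : X), 0 ≤ survProb P A s t x := by
  intro t
  induction t with
  | zero => intro s x; simp only [survProb]; split <;> norm_num
  | succ t ih =>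
    intro s x
    simp only [survProb]
    split
    · exact le_refl 0
    · exact Finset.sum_nonneg fun y _ => mul_nonneg (hnonneg _ _ _) (ih _ _)

lemma sp_le_one (hnonneg : ∀ t x y, 0 ≤ P t x y) (hrow : ∀ t x, ∑ y, P t x y = 1) :
    ∀ t s (x : X), survProb P A s t x ≤ 1 := by
  intro t
  induction t with
  | zero => intro s x; simp only [survProb]; split <;> norm_num
  | succ t ih =>
    intro s x
    simp only [survProb]
    split
    · norm_num
    · calc ∑ y, P s x y * survProb P A (s + 1) t y
          ≤ ∑ y, P s x y * 1 :=
            Finset.sum_le_sum fun y _ => mul_le_mul_of_nonneg_left (ih _ _) (hnonneg _ _ _)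
        _ = 1 := by simp [hrow]

lemma sp_mono (hnonneg : ∀ t x y, 0 ≤ P t x y) (hrow : ∀ t x, ∑ y, P t x y = 1) :
    ∀ t s (x : X), survProb P A s (t + 1) x ≤ survProb P A s t x := by
  intro t
  induction t with
  | zero =>
    intro s x
    simp only [survProb]
    split
    · exact le_refl 0
    · calc ∑ y, P s x y * survProb P A (s + 1) 0 y
          ≤ ∑ y, P s x y * 1 :=
            Finset.sum_le_sum fun y _ =>
              mul_le_mul_of_nonneg_left (sp_le_one P A hnonneg hrow 0 _ _) (hnonneg _ _ _)
        _ = 1 := by simp [hrow]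
  | succ t ih =>
    intro s x
    show survProb P A s (t + 1 + 1) x ≤ survProb P A s (t + 1) x
    simp only [survProb]
    split
    · exact le_refl 0
    · exact Finset.sum_le_sum fun y _ =>
        mul_le_mul_of_nonneg_left (ih _ _) (hnonneg _ _ _)

lemma sp_anti (hnonneg : ∀ t x y, 0 ≤ P t x y) (hrow : ∀ t x, ∑ y, P t x y = 1)
    {m n : ℕ} (h : m ≤ n) (s : ℕ) (x : X) :
    survProb P A s n x ≤ survProb P A s m x := by
  induction n with
  | zero => simp_all
  | succ n ih =>
    rcases Nat.lt_or_ge m (n + 1) with hm | hm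
    · exact (sp_mono P A hnonneg hrow n s x).trans (ih (Nat.lt_succ_iff.mp hm))
    · have : m = n + 1 := le_antisymm h hm
      subst this; exact le_refl _

variable (hnonneg : ∀ t x y, 0 ≤ P t x y) (hrow : ∀ t x, ∑ y, P t x y = 1)
  (hV0 : ∀ x ∈ A, V x = 0) (hVnn : ∀ x, 0 ≤ V x)

include hV0 in
lemma wv_zero (s : ℕ) (x : X) : Wv P A V s 0 x = V x := by
  simp only [Wv]
  split
  · exact (hV0 x ‹_›).symm
  · rfl

include hnonneg hVnn in
lemma wv_nonneg : ∀ t s (x : X), 0 ≤ Wv P A V s t x := by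
  intro t
  induction t with
  | zero =>
    intro s x
    simp only [Wv]
    split
    · exact le_refl 0
    · exact hVnn x
  | succ t ih =>
    intro s x
    simp only [Wv]
    split
    · exact le_refl 0
    · exact Finset.sum_nonneg fun y _ => mul_nonneg (hnonneg _ _ _) (ih _ _)

include hnonneg hVnn in
lemma wv_le {M : ℝ} (hM : ∀ y, V y ≤ M) :
    ∀ t s (x : X), Wv P A V s t x ≤ M * survProb P A s t x := by
  intro t
  induction t with
  | zero =>
    intro s x
    simp only [Wv, survProb]
    split
    · simp
    · simpa using hM x
  | succ t ih =>
    intro s x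
    simp only [Wv, survProb]
    split
    · simp
    · rw [Finset.mul_sum]
      refine Finset.sum_le_sum fun y _ => ?_
      calc P s x y * Wv P A V (s + 1) t y ≤ P s x y * (M * survProb P A (s + 1) t y) :=
            mul_le_mul_of_nonneg_left (ih _ _) (hnonneg _ _ _)
        _ = M * (P s x y * survProb P A (s + 1) t y) := by ring

include hnonneg hV0 in
lemma wv_step_l {c_l : ℝ}
    (hd : ∀ t x, x ∉ A → ∑ y, P t x y * V y ≤ V x - c_l) :
    ∀ t s (x : X), Wv P A V s (t + 1) x ≤ Wv P A V s t x - c_l * survProb P A s t x := by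
  intro t
  induction t with
  | zero =>
    intro s x
    simp only [Wv, survProb]
    by_cases hx : x ∈ A
    · simp [hx]
    · simp only [hx, if_false]
      have : ∀ y, Wv P A V (s + 1) 0 y = V y := fun y => wv_zero P A V hV0 _ _
      calc ∑ y, P s x y * Wv P A V (s + 1) 0 y = ∑ y, P s x y * V y := by
            simp_rw [this]
        _ ≤ V x - c_l := hd s x hx
        _ = V x - c_l * 1 := by ring
  | succ t ih =>
    intro s x
    show Wv P A V s (t + 1 + 1) x ≤ _
    simp only [Wv, survProb]
    by_cases hx : x ∈ A
    · simp [hx]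
    · simp only [hx, if_false]
      calc ∑ y, P s x y * Wv P A V (s + 1) (t + 1) y
          ≤ ∑ y, P s x y * (Wv P A V (s + 1) t y - c_l * survProb P A (s + 1) t y) :=
            Finset.sum_le_sum fun y _ => mul_le_mul_of_nonneg_left (ih _ _) (hnonneg _ _ _)
        _ = (∑ y, P s x y * Wv P A V (s + 1) t y)
              - c_l * ∑ y, P s x y * survProb P A (s + 1) t y := by
            rw [Finset.mul_sum, ← Finset.sum_sub_distrib]
            exact Finset.sum_congr rfl fun y _ => by ring

include hnonneg hV0 in
lemma wv_step_u {c_u : ℝ}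
    (hd : ∀ t x, x ∉ A → V x - c_u ≤ ∑ y, P t x y * V y) :
    ∀ t s (x : X), Wv P A V s t x - c_u * survProb P A s t x ≤ Wv P A V s (t + 1) x := by
  intro t
  induction t with
  | zero =>
    intro s x
    simp only [Wv, survProb]
    by_cases hx : x ∈ A
    · simp [hx]
    · simp only [hx, if_false]
      have : ∀ y, Wv P A V (s + 1) 0 y = V y := fun y => wv_zero P A V hV0 _ _
      calc V x - c_u * 1 = V x - c_u := by ring
        _ ≤ ∑ y, P s x y * V y := hd s x hx
        _ = ∑ y, P s x y * Wv P A V (s + 1) 0 y := by simp_rw [this]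
  | succ t ih =>
    intro s x
    show _ ≤ Wv P A V s (t + 1 + 1) x
    simp only [Wv, survProb]
    by_cases hx : x ∈ A
    · simp [hx]
    · simp only [hx, if_false]
      calc (∑ y, P s x y * Wv P A V (s + 1) t y)
              - c_u * ∑ y, P s x y * survProb P A (s + 1) t y
          = ∑ y, P s x y * (Wv P A V (s + 1) t y - c_u * survProb P A (s + 1) t y) := by
            rw [Finset.mul_sum, ← Finset.sum_sub_distrib]
            exact Finset.sum_congr rfl fun y _ => by ring
        _ ≤ ∑ y, P s x y * Wv P A V (s + 1) (t + 1) y :=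
            Finset.sum_le_sum fun y _ => mul_le_mul_of_nonneg_left (ih _ _) (hnonneg _ _ _)

include hnonneg hV0 in
lemma wv_tel_l {c_l : ℝ}
    (hd : ∀ t x, x ∉ A → ∑ y, P t x y * V y ≤ V x - c_l) (N s : ℕ) (x : X) :
    c_l * ∑ t ∈ Finset.range N, survProb P A s t x ≤ Wv P A V s 0 x - Wv P A V s N x := by
  induction N with
  | zero => simp
  | succ N ih =>
    rw [Finset.sum_range_succ, mul_add]
    have h1 := wv_step_l P A V hnonneg hV0 hd N s x
    linarith

include hnonneg hV0 in
lemma wv_tel_u {c_u : ℝ}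
    (hd : ∀ t x, x ∉ A → V x - c_u ≤ ∑ y, P t x y * V y) (N s : ℕ) (x : X) :
    Wv P A V s 0 x - c_u * ∑ t ∈ Finset.range N, survProb P A s t x ≤ Wv P A V s N x := by
  induction N with
  | zero => simp
  | succ N ih =>
    rw [Finset.sum_range_succ, mul_add]
    have h1 := wv_step_u P A V hnonneg hV0 hd N s x
    linarith

/-- The first-hit probability at step `t+1` is a difference of survival probabilities. -/
lemma hit_eq_diff (hrow : ∀ t x, ∑ y, P t x y = 1) :
    ∀ t s (x : X),
      hitProb P A s (t + 1) x = survProb P A s t x - survProb P A s (t + 1) x := by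
  intro t
  induction t with
  | zero =>
    intro s x
    simp only [hitProb, survProb]
    by_cases hx : x ∈ A
    · simp [hx]
    · simp only [hx, if_false]
      have : ∀ y : X, (if y ∈ A then (1:ℝ) else 0) = 1 - (if y ∈ A then 0 else 1) := by
        intro y; split <;> norm_num
      calc (∑ y, P s x y * if y ∈ A then (1:ℝ) else 0)
          = ∑ y, (P s x y * 1 - P s x y * (if y ∈ A then 0 else 1)) := by
            refine Finset.sum_congr rfl fun y _ => ?_
            rw [this y]; ring
        _ = 1 - ∑ y, P s x y * (if y ∈ A then (0:ℝ) else 1) := by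
            rw [Finset.sum_sub_distrib]
            simp [hrow]
  | succ t ih =>
    intro s x
    show hitProb P A s (t + 1 + 1) x = survProb P A s (t + 1) x - survProb P A s (t + 1 + 1) x
    simp only [hitProb, survProb]
    by_cases hx : x ∈ A
    · simp [hx]
    · simp only [hx, if_false]
      calc (∑ y, P s x y * hitProb P A (s + 1) (t + 1) y)
          = ∑ y, (P s x y * survProb P A (s + 1) t y
              - P s x y * survProb P A (s + 1) (t + 1) y) := by
            refine Finset.sum_congr rfl fun y _ => ?_
            rw [ih (s + 1) y]; ring
        _ = _ := by rw [Finset.sum_sub_distrib]; simp only [survProb]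

/-- Abel-summation identity relating partial expected hitting times to survival sums. -/
lemma abel_identity (hrow : ∀ t x, ∑ y, P t x y = 1) (x : X) :
    ∀ N : ℕ, ∑ t ∈ Finset.range (N + 1), (t : ℝ) * hitProb P A 0 t x
      = (∑ t ∈ Finset.range N, survProb P A 0 t x) - N * survProb P A 0 N x := by
  intro N
  induction N with
  | zero => simp
  | succ N ih =>
    rw [Finset.sum_range_succ, ih, hit_eq_diff P A hrow N 0 x, Finset.sum_range_succ]
    push_cast
    ring

end aux
section geo

variable {X : Type*} [Fintype X] [DecidableEq X] (P : ℕ → X → X → ℝ) (A : Finset X)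

lemma sp_submul (hnonneg : ∀ t x y, 0 ≤ P t x y) {n0 : ℕ}
    (hB : ∀ s (y : X), survProb P A s n0 y ≤ 1 / 2) :
    ∀ m s (x : X), survProb P A s (m + n0) x ≤ (1 / 2) * survProb P A s m x := by
  intro m
  induction m with
  | zero =>
    intro s x
    by_cases hx : x ∈ A
    · simp [sp_mem P A hx]
    · have h0 : survProb P A s 0 x = 1 := by simp [survProb, hx]
      simpa [h0] using hB s x
  | succ m ih =>
    intro s x
    have hm : m + 1 + n0 = (m + n0) + 1 := by omega
    rw [hm]
    by_cases hx : x ∈ A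
    · simp [sp_mem P A hx]
    · show (if x ∈ A then 0 else ∑ y, P s x y * survProb P A (s + 1) (m + n0) y)
        ≤ (1 / 2) * survProb P A s (m + 1) x
      simp only [hx, if_false]
      have h1 : survProb P A s (m + 1) x = ∑ y, P s x y * survProb P A (s + 1) m y := by
        simp only [survProb, hx, if_false]
      rw [h1, Finset.mul_sum]
      refine Finset.sum_le_sum fun y _ => ?_
      calc P s x y * survProb P A (s + 1) (m + n0) y
          ≤ P s x y * ((1 / 2) * survProb P A (s + 1) m y) :=
            mul_le_mul_of_nonneg_left (ih _ _) (hnonneg _ _ _)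
        _ = 1 / 2 * (P s x y * survProb P A (s + 1) m y) := by ring

lemma sp_geo (hnonneg : ∀ t x y, 0 ≤ P t x y) (hrow : ∀ t x, ∑ y, P t x y = 1) {n0 : ℕ}
    (hB : ∀ s (y : X), survProb P A s n0 y ≤ 1 / 2) :
    ∀ k s (x : X), survProb P A s (n0 * k) x ≤ (1 / 2 : ℝ) ^ k := by
  intro k
  induction k with
  | zero => intro s x; simpa using sp_le_one P A hnonneg hrow 0 s x
  | succ k ih =>
    intro s x
    have hm : n0 * (k + 1) = n0 * k + n0 := by ring
    rw [hm]
    calc survProb P A s (n0 * k + n0) x ≤ (1 / 2) * survProb P A s (n0 * k) x :=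
          sp_submul P A hnonneg hB _ _ _
      _ ≤ (1 / 2) * (1 / 2 : ℝ) ^ k := by
          have := ih s x; linarith
      _ = (1 / 2 : ℝ) ^ (k + 1) := by ring

end geo

/-- Additive drift theorem: if the distance function `V` vanishes exactly on the
target set `A` and the one-step expected decrease of `V` is between the constants
`c_l` and `c_u` from every state with positive distance (at every time), then the
expected first hitting time of `A` from `x` is between `V x / c_u` and `V x / c_l`. -/
theorem additive_drift {X : Type*} [Fintype X] [DecidableEq X]
    (P : ℕ → X → X → ℝ) (A : Finset X)
    (hnonneg : ∀ t x y, 0 ≤ P t x y) (hrow : ∀ t x, ∑ y, P t x y = 1)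
    (V : X → ℝ) (hV0 : ∀ x ∈ A, V x = 0) (hVpos : ∀ x ∉ A, 0 < V x)
    (c_l c_u : ℝ) (hcl : 0 < c_l) (hcu : c_l ≤ c_u)
    (hdrift : ∀ t : ℕ, ∀ x : X, 0 < V x →
      c_l ≤ V x - ∑ y, P t x y * V y ∧ V x - ∑ y, P t x y * V y ≤ c_u) :
    ∀ x : X, V x / c_u ≤ efht P A x ∧ efht P A x ≤ V x / c_l := by
  intro x
  have hcu0 : 0 < c_u := lt_of_lt_of_le hcl hcu
  have hVnn : ∀ z, 0 ≤ V z := by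
    intro z
    by_cases hz : z ∈ A
    · exact le_of_eq (hV0 z hz).symm
    · exact (hVpos z hz).le
  have hdl : ∀ t z, z ∉ A → ∑ y, P t z y * V y ≤ V z - c_l := by
    intro t z hz
    have := (hdrift t z (hVpos z hz)).1
    linarith
  have hdu : ∀ t z, z ∉ A → V z - c_u ≤ ∑ y, P t z y * V y := by
    intro t z hz
    have := (hdrift t z (hVpos z hz)).2
    linarith
  set M : ℝ := ∑ y, V y with hMdef
  have hVleM : ∀ z, V z ≤ M := fun z =>
    Finset.single_le_sum (fun y _ => hVnn y) (Finset.mem_univ z)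
  have hMnn : 0 ≤ M := Finset.sum_nonneg fun y _ => hVnn y
  -- partial sums of survival probabilities are bounded
  have hq_sum : ∀ N s z, ∑ t ∈ Finset.range N, survProb P A s t z ≤ V z / c_l := by
    intro N s z
    have h1 := wv_tel_l P A V hnonneg hV0 hdl N s z
    have h2 : Wv P A V s 0 z = V z := wv_zero P A V hV0 s z
    have h3 : 0 ≤ Wv P A V s N z := wv_nonneg P A V hnonneg hVnn N s z
    rw [le_div_iff₀ hcl, mul_comm]
    linarith
  -- choice of the block length n0
  set n0 : ℕ := Nat.ceil (2 * M / c_l) + 1 with hn0def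
  have hn0pos : 0 < n0 := Nat.succ_pos _
  have hn0R : (0:ℝ) < n0 := by exact_mod_cast hn0pos
  have h2M : 2 * M ≤ c_l * n0 := by
    have h1 : 2 * M / c_l ≤ (Nat.ceil (2 * M / c_l) : ℝ) := Nat.le_ceil _
    have h2 : (Nat.ceil (2 * M / c_l) : ℝ) ≤ (n0 : ℝ) := by
      rw [hn0def]; push_cast; linarith
    have h3 : 2 * M / c_l ≤ (n0 : ℝ) := h1.trans h2
    rw [div_le_iff₀ hcl] at h3
    linarith
  have hB : ∀ s (z : X), survProb P A s n0 z ≤ 1 / 2 := by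
    intro s z
    by_cases hz : z ∈ A
    · rw [sp_mem P A hz]; norm_num
    · have hsum : (n0 : ℝ) * survProb P A s n0 z
          ≤ ∑ t ∈ Finset.range n0, survProb P A s t z := by
        calc (n0 : ℝ) * survProb P A s n0 z
            = ∑ _t ∈ Finset.range n0, survProb P A s n0 z := by
              rw [Finset.sum_const, Finset.card_range, nsmul_eq_mul]
          _ ≤ ∑ t ∈ Finset.range n0, survProb P A s t z :=
              Finset.sum_le_sum fun t ht =>
                sp_anti P A hnonneg hrow (le_of_lt (Finset.mem_range.mp ht)) s z
      have hle : (n0 : ℝ) * survProb P A s n0 z ≤ M / c_l := by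
        calc (n0 : ℝ) * survProb P A s n0 z
            ≤ ∑ t ∈ Finset.range n0, survProb P A s t z := hsum
          _ ≤ V z / c_l := hq_sum n0 s z
          _ ≤ M / c_l := (div_le_div_iff_of_pos_right hcl).mpr (hVleM z)
      have hle2 : c_l * ((n0 : ℝ) * survProb P A s n0 z) ≤ M := by
        have h5 := mul_le_mul_of_nonneg_left hle hcl.le
        have h6 : c_l * (M / c_l) = M := by field_simp
        linarith
      nlinarith [hle2, h2M, mul_pos hcl hn0R, sp_nonneg P A hnonneg n0 s z]
  -- geometric decay
  have hgeo : ∀ N : ℕ, survProb P A 0 N x ≤ (1 / 2 : ℝ) ^ (N / n0) := by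
    intro N
    have h1 : n0 * (N / n0) ≤ N := by
      rw [Nat.mul_comm]; exact Nat.div_mul_le_self N n0
    calc survProb P A 0 N x ≤ survProb P A 0 (n0 * (N / n0)) x :=
          sp_anti P A hnonneg hrow h1 0 x
      _ ≤ (1 / 2 : ℝ) ^ (N / n0) := sp_geo P A hnonneg hrow hB _ 0 x
  -- summability of survival probabilities
  have hqnn : ∀ t, 0 ≤ survProb P A 0 t x := fun t => sp_nonneg P A hnonneg t 0 x
  have hsq : Summable (fun t => survProb P A 0 t x) :=
    summable_of_sum_range_le hqnn (fun N => hq_sum N 0 x)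
  have htsum_q_le : (∑' t, survProb P A 0 t x) ≤ V x / c_l :=
    Real.tsum_le_of_sum_range_le hqnn (fun N => hq_sum N 0 x)
  -- N * q_N → 0
  have h2a : Filter.Tendsto (fun k : ℕ => ((k : ℝ) + 1) * (1 / 2 : ℝ) ^ k)
      Filter.atTop (nhds 0) := by
    have s1 : Summable (fun n : ℕ => (n : ℝ) ^ 1 * (1 / 2 : ℝ) ^ n) :=
      summable_pow_mul_geometric_of_norm_lt_one 1
        (by rw [Real.norm_eq_abs, abs_of_nonneg (by norm_num : (0:ℝ) ≤ 1/2)]; norm_num)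
    have t1 := s1.tendsto_atTop_zero
    have t2 : Filter.Tendsto (fun n : ℕ => (1 / 2 : ℝ) ^ n) Filter.atTop (nhds 0) :=
      tendsto_pow_atTop_nhds_zero_of_lt_one (by norm_num) (by norm_num)
    have := t1.add t2
    simp only [add_zero] at this
    convert this using 2 with k
    ring
  have hdivT : Filter.Tendsto (fun N : ℕ => N / n0) Filter.atTop Filter.atTop := by
    apply Filter.tendsto_atTop_atTop.mpr
    intro b
    refine ⟨n0 * b, fun a ha => ?_⟩
    rw [Nat.le_div_iff_mul_le hn0pos, Nat.mul_comm]
    exact ha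
  have hcomp : Filter.Tendsto
      (fun N : ℕ => (((N / n0 : ℕ) : ℝ) + 1) * (1 / 2 : ℝ) ^ (N / n0))
      Filter.atTop (nhds 0) := h2a.comp hdivT
  have hNq : Filter.Tendsto (fun N : ℕ => (N : ℝ) * survProb P A 0 N x)
      Filter.atTop (nhds 0) := by
    have hg : Filter.Tendsto
        (fun N : ℕ => (n0 : ℝ) * ((((N / n0 : ℕ) : ℝ) + 1) * (1 / 2 : ℝ) ^ (N / n0)))
        Filter.atTop (nhds 0) := by
      have := hcomp.const_mul (n0 : ℝ)
      simpa using this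
    apply squeeze_zero (fun N => mul_nonneg (Nat.cast_nonneg N) (hqnn N)) _ hg
    intro N
    have hb1 : (N : ℝ) * survProb P A 0 N x ≤ (N : ℝ) * (1 / 2 : ℝ) ^ (N / n0) :=
      mul_le_mul_of_nonneg_left (hgeo N) (Nat.cast_nonneg N)
    have hb2 : (N : ℝ) ≤ (n0 : ℝ) * (((N / n0 : ℕ) : ℝ) + 1) := by
      have h1 : N < n0 * (N / n0 + 1) := by
        calc N = n0 * (N / n0) + N % n0 := (Nat.div_add_mod N n0).symm
          _ < n0 * (N / n0) + n0 := Nat.add_lt_add_left (Nat.mod_lt N hn0pos) _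
          _ = n0 * (N / n0 + 1) := by ring
      exact_mod_cast h1.le
    calc (N : ℝ) * survProb P A 0 N x ≤ (N : ℝ) * (1 / 2 : ℝ) ^ (N / n0) := hb1
      _ ≤ ((n0 : ℝ) * (((N / n0 : ℕ) : ℝ) + 1)) * (1 / 2 : ℝ) ^ (N / n0) :=
          mul_le_mul_of_nonneg_right hb2 (by positivity)
      _ = (n0 : ℝ) * ((((N / n0 : ℕ) : ℝ) + 1) * (1 / 2 : ℝ) ^ (N / n0)) := by ring
  -- summability of t * hitProb and the identity efht = ∑' survProb
  have hhnn : ∀ t : ℕ, 0 ≤ (t : ℝ) * hitProb P A 0 t x := by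
    intro t
    cases t with
    | zero => simp
    | succ t =>
      have h1 : hitProb P A 0 (t + 1) x
          = survProb P A 0 t x - survProb P A 0 (t + 1) x := hit_eq_diff P A hrow t 0 x
      have h2 := sp_mono P A hnonneg hrow t 0 x
      have : 0 ≤ hitProb P A 0 (t + 1) x := by rw [h1]; linarith
      positivity
  have hhpart : ∀ N, ∑ t ∈ Finset.range N, (t : ℝ) * hitProb P A 0 t x ≤ V x / c_l := by
    intro N
    cases N with
    | zero => simpa using div_nonneg (hVnn x) hcl.le
    | succ N =>
      rw [abel_identity P A hrow x N]
      have h1 : 0 ≤ (N : ℝ) * survProb P A 0 N x :=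
        mul_nonneg (Nat.cast_nonneg N) (hqnn N)
      have h2 := hq_sum N 0 x
      linarith
  have hsg : Summable (fun t : ℕ => (t : ℝ) * hitProb P A 0 t x) :=
    summable_of_sum_range_le hhnn hhpart
  have hefht : efht P A x = ∑' t : ℕ, (t : ℝ) * hitProb P A 0 t x := rfl
  have hEq : efht P A x = ∑' t, survProb P A 0 t x := by
    have T1 : Filter.Tendsto
        (fun N : ℕ => ∑ t ∈ Finset.range (N + 1), (t : ℝ) * hitProb P A 0 t x)
        Filter.atTop (nhds (efht P A x)) := by
      rw [hefht]
      exact hsg.hasSum.tendsto_sum_nat.comp (Filter.tendsto_add_atTop_nat 1)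
    have T2 : Filter.Tendsto
        (fun N : ℕ => (∑ t ∈ Finset.range N, survProb P A 0 t x)
          - (N : ℝ) * survProb P A 0 N x)
        Filter.atTop (nhds ((∑' t, survProb P A 0 t x) - 0)) :=
      hsq.hasSum.tendsto_sum_nat.sub hNq
    have heqfun : (fun N : ℕ => ∑ t ∈ Finset.range (N + 1), (t : ℝ) * hitProb P A 0 t x)
        = (fun N : ℕ => (∑ t ∈ Finset.range N, survProb P A 0 t x)
          - (N : ℝ) * survProb P A 0 N x) := by
      funext N
      exact abel_identity P A hrow x N
    rw [heqfun] at T1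
    have := tendsto_nhds_unique T1 T2
    rw [this, sub_zero]
  -- upper bound
  have hupper : efht P A x ≤ V x / c_l := by
    rw [hefht]
    exact Real.tsum_le_of_sum_range_le hhnn hhpart
  -- lower bound
  have hlow : V x ≤ c_u * ∑' t, survProb P A 0 t x := by
    have hper : ∀ N : ℕ, V x ≤ c_u * (∑ t ∈ Finset.range N, survProb P A 0 t x)
        + M * survProb P A 0 N x := by
      intro N
      have h1 := wv_tel_u P A V hnonneg hV0 hdu N 0 x
      have h2 : Wv P A V 0 0 x = V x := wv_zero P A V hV0 0 x
      have h3 : Wv P A V 0 N x ≤ M * survProb P A 0 N x :=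
        wv_le P A V hnonneg hVnn hVleM N 0 x
      linarith
    have hT : Filter.Tendsto
        (fun N : ℕ => c_u * (∑ t ∈ Finset.range N, survProb P A 0 t x)
          + M * survProb P A 0 N x)
        Filter.atTop (nhds (c_u * (∑' t, survProb P A 0 t x) + M * 0)) :=
      (hsq.hasSum.tendsto_sum_nat.const_mul c_u).add
        (hsq.tendsto_atTop_zero.const_mul M)
    rw [mul_zero, add_zero] at hT
    exact ge_of_tendsto' hT hper
  constructor
  · rw [hEq, div_le_iff₀ hcu0]
    calc V x ≤ c_u * ∑' t, survProb P A 0 t x := hlow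
      _ = (∑' t, survProb P A 0 t x) * c_u := mul_comm _ _
  · exact hupper
end

section
/- Let X be a finite set with target subset X*, let (ξ'_t)_{t≥0} be a time-homogeneous Markov chain on X with finite expected first hitting times, and let (ξ_t)_{t≥0} be a (possibly time-inhomogeneous) Markov chain on X. Let {X_0, X_1, ..., X_m} be the partition of X into level sets of the function x ↦ E[τ' | ξ'_0 = x], ordered so that E[τ' | ξ'_0 ∈ X_0] < E[τ' | ξ'_0 ∈ X_1] < ... < E[τ' | ξ'_0 ∈ X_m], with X_0 = X*. If for all t ≥ 0, all x ∈ X \ X_0, and all i ∈ {0,...,m-1}, ∑_{j=0}^{i} P(ξ_{t+1} ∈ X_j | ξ_t = x) ≥ ∑_{j=0}^{i} P(ξ'_1 ∈ X_j | ξ'_0 = x), then for every x ∈ X, E[τ | ξ_0 = x] ≤ E[τ' | ξ'_0 = x]. -/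
section Aux

variable {X : Type*} [Fintype X] [DecidableEq X]

lemma hitProb_zero (P : ℕ → X → X → ℝ) (A : Finset X) (s : ℕ) (x : X) :
    hitProb P A s 0 x = if x ∈ A then 1 else 0 := rfl

lemma hitProb_succ (P : ℕ → X → X → ℝ) (A : Finset X) (s t : ℕ) (x : X) :
    hitProb P A s (t + 1) x
      = if x ∈ A then 0 else ∑ y, P s x y * hitProb P A (s + 1) t y := rfl

lemma hitProb_nonneg (P : ℕ → X → X → ℝ) (A : Finset X) (hP : ∀ t x y, 0 ≤ P t x y) :
    ∀ t s x, 0 ≤ hitProb P A s t x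
  | 0, s, x => by rw [hitProb_zero]; split <;> norm_num
  | t + 1, s, x => by
      rw [hitProb_succ]
      split
      · exact le_refl 0
      · exact Finset.sum_nonneg fun y _ =>
          mul_nonneg (hP s x y) (hitProb_nonneg P A hP t (s + 1) y)

lemma sum_hitProb_le_one (P : ℕ → X → X → ℝ) (A : Finset X)
    (hP : ∀ t x y, 0 ≤ P t x y) (hrow : ∀ t x, ∑ y, P t x y = 1) :
    ∀ n s x, ∑ t ∈ Finset.range (n + 1), hitProb P A s t x ≤ 1
  | 0, s, x => by
      rw [Finset.sum_range_one, hitProb_zero]; split <;> norm_num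
  | n + 1, s, x => by
      rw [Finset.sum_range_succ' (fun t => hitProb P A s t x) (n + 1)]
      by_cases hx : x ∈ A
      · simp only [hitProb_succ, hitProb_zero, if_pos hx, Finset.sum_const_zero, zero_add]
        exact le_refl 1
      · simp only [hitProb_succ, hitProb_zero, if_neg hx, add_zero]
        calc ∑ t ∈ Finset.range (n + 1), ∑ y, P s x y * hitProb P A (s + 1) t y
            = ∑ y, P s x y * ∑ t ∈ Finset.range (n + 1), hitProb P A (s + 1) t y := by
              rw [Finset.sum_comm]; simp [Finset.mul_sum]
          _ ≤ ∑ y, P s x y * 1 := Finset.sum_le_sum fun y _ =>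
              mul_le_mul_of_nonneg_left (sum_hitProb_le_one P A hP hrow n (s + 1) y) (hP s x y)
          _ = 1 := by simp [hrow s x]

lemma hitProb_const (P' : X → X → ℝ) (A : Finset X) :
    ∀ t s s' (x : X), hitProb (fun _ => P') A s t x = hitProb (fun _ => P') A s' t x
  | 0, _, _, _ => rfl
  | t + 1, s, s', x => by
      rw [hitProb_succ, hitProb_succ]
      split
      · rfl
      · exact Finset.sum_congr rfl fun y _ => by
          rw [hitProb_const P' A t (s + 1) (s' + 1) y]

/-- Expected time to hit `A`, truncated at `n` steps. -/
noncomputable def truncE (P : ℕ → X → X → ℝ) (A : Finset X) : ℕ → ℕ → X → ℝ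
  | 0, _, _ => 0
  | n + 1, s, x => if x ∈ A then 0 else 1 + ∑ y, P s x y * truncE P A n (s + 1) y

/-- Abel summation by parts. -/
lemma abel_by_parts (G p : ℕ → ℝ) :
    ∀ n : ℕ, ∑ i ∈ Finset.range (n + 1), G i * p i
      = G n * (∑ j ∈ Finset.range (n + 1), p j)
        - ∑ i ∈ Finset.range n, (G (i + 1) - G i) * ∑ j ∈ Finset.range (i + 1), p j
  | 0 => by simp
  | n + 1 => by
      rw [Finset.sum_range_succ (fun i => G i * p i), abel_by_parts G p n,
        Finset.sum_range_succ (fun i => (G (i + 1) - G i) * ∑ j ∈ Finset.range (i + 1), p j)]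
      simp only [Finset.sum_range_succ]
      ring

end Aux

/-- Comparison theorem (noise makes optimization no slower): if from every
non-optimal state, at every time, the chain `P` dominates the homogeneous chain
`P'` in terms of its probability of jumping into the union of the first levels of
the EFHT-partition of `P'`, then the expected first hitting time of `P` is, from
every state, at most that of `P'`. -/
theorem noisy_chain_faster {X : Type*} [Fintype X] [DecidableEq X]
    (A : Finset X) (P' : X → X → ℝ) (P : ℕ → X → X → ℝ)
    (hP'nonneg : ∀ x y, 0 ≤ P' x y) (hP'row : ∀ x, ∑ y, P' x y = 1)
    (hPnonneg : ∀ t x y, 0 ≤ P t x y) (hProw : ∀ t x, ∑ y, P t x y = 1)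
    (hfin : ∀ x, Summable (fun t : ℕ => (t : ℝ) * hitProb (fun _ => P') A 0 t x))
    (hhit : ∀ x, ∑' t : ℕ, hitProb (fun _ => P') A 0 t x = 1)
    -- the EFHT-partition X_0, ..., X_m of the homogeneous chain P'
    (m : ℕ) (part : ℕ → Finset X)
    (hne : ∀ i ≤ m, (part i).Nonempty)
    (hdisj : ∀ i ≤ m, ∀ j ≤ m, i ≠ j → Disjoint (part i) (part j))
    (hcover : ∀ x : X, ∃ i ≤ m, x ∈ part i)
    (hpart0 : part 0 = A)
    (hlevel : ∀ i ≤ m, ∀ x ∈ part i, ∀ y ∈ part i,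
      efht (fun _ => P') A x = efht (fun _ => P') A y)
    (horder : ∀ i ≤ m, ∀ j ≤ m, i < j → ∀ x ∈ part i, ∀ y ∈ part j,
      efht (fun _ => P') A x < efht (fun _ => P') A y)
    -- the domination condition
    (hdom : ∀ t : ℕ, ∀ x : X, x ∉ A → ∀ i < m,
      ∑ j ∈ Finset.range (i + 1), ∑ y ∈ part j, P t x y
        ≥ ∑ j ∈ Finset.range (i + 1), ∑ y ∈ part j, P' x y) :
    ∀ x : X, efht P A x ≤ efht (fun _ => P') A x := by
  
  set g : X → ℝ := efht (fun _ => P') A with hgdef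
  have hnn : ∀ t s (x : X), 0 ≤ hitProb (fun _ => P') A s t x :=
    fun t s x => hitProb_nonneg _ A (fun _ x y => hP'nonneg x y) t s x
  have gnn : ∀ x, 0 ≤ g x :=
    fun x => tsum_nonneg fun t => mul_nonneg t.cast_nonneg (hnn t 0 x)
  have hsummable : ∀ x, Summable (fun t => hitProb (fun _ => P') A 0 t x) := by
    intro x
    refine summable_of_sum_range_le (c := 1) (fun t => hnn t 0 x) (fun n => ?_)
    cases n with
    | zero => simp
    | succ k =>
        exact sum_hitProb_le_one _ A (fun _ x y => hP'nonneg x y)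
          (fun _ x => hP'row x) k 0 x
  -- the one-step recurrence for g outside A
  have g_rec : ∀ x ∉ A, g x = 1 + ∑ y, P' x y * g y := by
    intro x hx
    set φ : X → ℕ → ℝ := fun y t => ((t : ℝ) + 1) * hitProb (fun _ => P') A 0 t y with hφdef
    have hφ : ∀ y, Summable (φ y) := by
      intro y
      have := (hfin y).add (hsummable y)
      simpa [hφdef, add_mul, one_mul] using this
    have hφsum : ∀ y, ∑' t, φ y t = g y + 1 := by
      intro y
      have : ∀ t : ℕ, φ y t = (t : ℝ) * hitProb (fun _ => P') A 0 t y
          + hitProb (fun _ => P') A 0 t y := by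
        intro t; simp [hφdef]; ring
      rw [tsum_congr this, Summable.tsum_add (hfin y) (hsummable y), hhit y]
      rfl
    have step1 : g x = ∑' t : ℕ, ∑ y, P' x y * φ y t := by
      rw [hgdef]
      show (∑' t : ℕ, (t : ℝ) * hitProb (fun _ => P') A 0 t x) = _
      rw [Summable.tsum_eq_zero_add (hfin x)]
      simp only [Nat.cast_zero, zero_mul, zero_add]
      refine tsum_congr fun t => ?_
      rw [hitProb_succ, if_neg hx]
      push_cast
      rw [Finset.mul_sum]
      refine Finset.sum_congr rfl fun y _ => ?_
      rw [hitProb_const P' A t (0 + 1) 0 y, hφdef]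
      ring
    rw [step1, Summable.tsum_finsetSum (fun y _ => (hφ y).mul_left (P' x y))]
    have : ∀ y ∈ Finset.univ, ∑' t, P' x y * φ y t = P' x y * (g y + 1) := by
      intro y _
      rw [tsum_mul_left, hφsum y]
    rw [Finset.sum_congr rfl this]
    simp only [mul_add, Finset.sum_add_distrib, mul_one, hP'row x]
    ring
  -- partition machinery
  have huniv : (Finset.univ : Finset X) = (Finset.range (m + 1)).biUnion part := by
    ext x
    simp only [Finset.mem_univ, Finset.mem_biUnion, Finset.mem_range, true_iff]
    obtain ⟨i, hi, hxi⟩ := hcover x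
    exact ⟨i, Nat.lt_succ_of_le hi, hxi⟩
  have hsum_part : ∀ f : X → ℝ,
      ∑ y, f y = ∑ i ∈ Finset.range (m + 1), ∑ y ∈ part i, f y := by
    intro f
    rw [show (Finset.univ : Finset X) = _ from huniv]
    refine Finset.sum_biUnion ?_
    intro i hi j hj hij
    exact hdisj i (Nat.lt_succ_iff.mp (Finset.mem_range.mp hi)) j
      (Nat.lt_succ_iff.mp (Finset.mem_range.mp hj)) hij
  -- the level values
  set G : ℕ → ℝ := fun i => if hi : i ≤ m then g ((hne i hi).choose) else 0 with hGdef
  have hG : ∀ i (hi : i ≤ m), ∀ x ∈ part i, g x = G i := by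
    intro i hi x hx
    simp only [hGdef, dif_pos hi]
    exact hlevel i hi x hx _ (hne i hi).choose_spec
  have hGmono : ∀ i < m, G i ≤ G (i + 1) := by
    intro i hi
    have hi' : i ≤ m := le_of_lt hi
    have hi1 : i + 1 ≤ m := hi
    simp only [hGdef, dif_pos hi', dif_pos hi1]
    exact le_of_lt (horder i hi' (i + 1) hi1 (Nat.lt_succ_self i)
      _ (hne i hi').choose_spec _ (hne (i + 1) hi1).choose_spec)
  -- key inequality
  have key : ∀ s (x : X), x ∉ A → ∑ y, P s x y * g y ≤ ∑ y, P' x y * g y := by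
    intro s x hx
    rw [hsum_part (fun y => P s x y * g y), hsum_part (fun y => P' x y * g y)]
    have hL : ∀ i ∈ Finset.range (m + 1),
        ∑ y ∈ part i, P s x y * g y = G i * ∑ y ∈ part i, P s x y := by
      intro i hi
      rw [Finset.mul_sum]
      refine Finset.sum_congr rfl fun y hy => ?_
      rw [hG i (Nat.lt_succ_iff.mp (Finset.mem_range.mp hi)) y hy]; ring
    have hR : ∀ i ∈ Finset.range (m + 1),
        ∑ y ∈ part i, P' x y * g y = G i * ∑ y ∈ part i, P' x y := by
      intro i hi
      rw [Finset.mul_sum]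
      refine Finset.sum_congr rfl fun y hy => ?_
      rw [hG i (Nat.lt_succ_iff.mp (Finset.mem_range.mp hi)) y hy]; ring
    rw [Finset.sum_congr rfl hL, Finset.sum_congr rfl hR,
      abel_by_parts G (fun i => ∑ y ∈ part i, P s x y) m,
      abel_by_parts G (fun i => ∑ y ∈ part i, P' x y) m]
    have hF : ∑ j ∈ Finset.range (m + 1), ∑ y ∈ part j, P s x y = 1 := by
      rw [← hsum_part (P s x)]; exact hProw s x
    have hF' : ∑ j ∈ Finset.range (m + 1), ∑ y ∈ part j, P' x y = 1 := by
      rw [← hsum_part (P' x)]; exact hP'row x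
    rw [hF, hF']
    refine sub_le_sub_left (Finset.sum_le_sum fun i hi => ?_) _
    have him : i < m := Finset.mem_range.mp hi
    exact mul_le_mul_of_nonneg_left (hdom s x hx i him)
      (sub_nonneg.mpr (hGmono i him))
  -- truncated expectations
  have trunc_le : ∀ n s (x : X),
      ∑ t ∈ Finset.range (n + 1), (t : ℝ) * hitProb P A s t x ≤ truncE P A n s x := by
    intro n
    induction n with
    | zero => intro s x; simp [truncE]
    | succ n ih =>
        intro s x
        rw [Finset.sum_range_succ' (fun t => (t : ℝ) * hitProb P A s t x) (n + 1)]
        simp only [Nat.cast_zero, zero_mul, add_zero]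
        by_cases hx : x ∈ A
        · simp only [hitProb_succ, if_pos hx, mul_zero, Finset.sum_const_zero]
          show (0:ℝ) ≤ truncE P A (n+1) s x
          simp [truncE, if_pos hx]
        · simp only [hitProb_succ, if_neg hx]
          show truncE P A (n+1) s x ≥ _
          simp only [truncE, if_neg hx, ge_iff_le]
          push_cast
          calc ∑ t ∈ Finset.range (n + 1),
                ((t : ℝ) + 1) * ∑ y, P s x y * hitProb P A (s + 1) t y
              = ∑ y, P s x y *
                  ∑ t ∈ Finset.range (n + 1), ((t : ℝ) + 1) * hitProb P A (s + 1) t y := by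
                rw [show (∑ t ∈ Finset.range (n + 1),
                      ((t : ℝ) + 1) * ∑ y, P s x y * hitProb P A (s + 1) t y)
                    = ∑ t ∈ Finset.range (n + 1), ∑ y,
                        P s x y * (((t : ℝ) + 1) * hitProb P A (s + 1) t y) from
                  Finset.sum_congr rfl fun t _ => by
                    rw [Finset.mul_sum]
                    exact Finset.sum_congr rfl fun y _ => by ring]
                rw [Finset.sum_comm]
                exact Finset.sum_congr rfl fun y _ => (Finset.mul_sum _ _ _).symm
            _ ≤ ∑ y, P s x y * (truncE P A n (s + 1) y + 1) := by
                refine Finset.sum_le_sum fun y _ => ?_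
                refine mul_le_mul_of_nonneg_left ?_ (hPnonneg s x y)
                have h1 : ∑ t ∈ Finset.range (n + 1),
                    ((t : ℝ) + 1) * hitProb P A (s + 1) t y
                    = (∑ t ∈ Finset.range (n + 1), (t : ℝ) * hitProb P A (s + 1) t y)
                      + ∑ t ∈ Finset.range (n + 1), hitProb P A (s + 1) t y := by
                  rw [← Finset.sum_add_distrib]
                  refine Finset.sum_congr rfl fun t _ => ?_
                  ring
                rw [h1]
                exact add_le_add (ih (s + 1) y)
                  (sum_hitProb_le_one P A hPnonneg hProw n (s + 1) y)
            _ = 1 + ∑ y, P s x y * truncE P A n (s + 1) y := by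
                simp only [mul_add, Finset.sum_add_distrib, mul_one, hProw s x]
                ring
  have trunc_le_g : ∀ n s (x : X), truncE P A n s x ≤ g x := by
    intro n
    induction n with
    | zero => intro s x; exact gnn x
    | succ n ih =>
        intro s x
        by_cases hx : x ∈ A
        · show (if x ∈ A then (0:ℝ) else _) ≤ g x
          rw [if_pos hx]; exact gnn x
        · show (if x ∈ A then (0:ℝ) else 1 + ∑ y, P s x y * truncE P A n (s + 1) y) ≤ g x
          rw [if_neg hx, g_rec x hx]
          refine add_le_add_right ?_ 1
          calc ∑ y, P s x y * truncE P A n (s + 1) y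
              ≤ ∑ y, P s x y * g y :=
                Finset.sum_le_sum fun y _ =>
                  mul_le_mul_of_nonneg_left (ih (s + 1) y) (hPnonneg s x y)
            _ ≤ ∑ y, P' x y * g y := key s x hx
  -- conclusion
  intro x
  show (∑' t : ℕ, (t : ℝ) * hitProb P A 0 t x) ≤ g x
  refine Real.tsum_le_of_sum_range_le
    (fun t => mul_nonneg t.cast_nonneg (hitProb_nonneg P A hPnonneg t 0 x)) (fun n => ?_)
  calc ∑ t ∈ Finset.range n, (t : ℝ) * hitProb P A 0 t x
      ≤ ∑ t ∈ Finset.range (n + 1), (t : ℝ) * hitProb P A 0 t x := by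
        refine Finset.sum_le_sum_of_subset_of_nonneg
          (Finset.range_subset_range.mpr (Nat.le_succ n)) fun t _ _ =>
          mul_nonneg t.cast_nonneg (hitProb_nonneg P A hPnonneg t 0 x)
    _ ≤ truncE P A n 0 x := trunc_le n 0 x
    _ ≤ g x := trunc_le_g n 0 x
end

section
/- Let G = (V, E) be a finite undirected connected graph. The expected cover time of a simple random walk on G (started at any vertex) is at most 2|E|(|V| - 1), where the cover time is the number of steps until every vertex has been visited at least once. -/
/-- The transition kernel, on pairs (current vertex, set of visited vertices), of
the simple random walk on the graph `G` which records the visited vertices: from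
`(v, S)` the walk moves to a uniformly random neighbor `u` of `v` and the visited
set becomes `insert u S`. -/
noncomputable def coverKernel {V : Type*} [Fintype V] [DecidableEq V]
    (G : SimpleGraph V) [DecidableRel G.Adj] :
    V × Finset V → V × Finset V → ℝ :=
  fun s t =>
    if G.Adj s.1 t.1 ∧ t.2 = insert t.1 s.2 then 1 / (G.degree s.1 : ℝ) else 0

set_option linter.unusedSectionVars false

section Generic
variable {X : Type*} [Fintype X] [DecidableEq X] (K : X → X → ℝ) (A : Finset X)

/-- time-homogeneous first-hitting probabilities -/
noncomputable def hp : ℕ → X → ℝ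
  | 0, x => if x ∈ A then 1 else 0
  | t + 1, x => if x ∈ A then 0 else ∑ y, K x y * hp t y

lemma hitProb_eq_hp : ∀ t s (x : X), hitProb (fun _ => K) A s t x = hp K A t x := by
  intro t
  induction t with
  | zero => intro s x; rfl
  | succ t ih =>
      intro s x
      show (if x ∈ A then 0 else ∑ y, K x y * hitProb (fun _ => K) A (s+1) t y) = _
      rw [hp]
      simp only [ih]

variable {K A}
variable (hK0 : ∀ x y, 0 ≤ K x y) (hK1 : ∀ x, ∑ y, K x y = 1)

include hK0 in
lemma hp_nonneg : ∀ t (x : X), 0 ≤ hp K A t x := by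
  intro t
  induction t with
  | zero => intro x; rw [hp]; positivity
  | succ t ih =>
      intro x; rw [hp]
      split
      · exact le_refl 0
      · exact Finset.sum_nonneg fun y _ => mul_nonneg (hK0 x y) (ih y)

include hK0 hK1 in
lemma sum_hp_le_one : ∀ T (x : X), ∑ t ∈ Finset.range T, hp K A t x ≤ 1 := by
  intro T
  induction T with
  | zero => intro x; simp
  | succ T ih =>
      intro x
      rw [Finset.sum_range_succ'] -- peels t = 0
      by_cases hx : x ∈ A
      · have h1 : ∀ t, hp K A (t+1) x = 0 := fun t => by rw [hp]; simp [hx]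
        simp [h1, hp, hx]
      · have h0 : hp K A 0 x = 0 := by rw [hp]; simp [hx]
        rw [h0, add_zero]
        have : ∀ t, hp K A (t+1) x = ∑ y, K x y * hp K A t y := fun t => by
          rw [hp]; simp [hx]
        calc ∑ t ∈ Finset.range T, hp K A (t+1) x
            = ∑ y, K x y * ∑ t ∈ Finset.range T, hp K A t y := by
              simp only [this]; rw [Finset.sum_comm]
              exact Finset.sum_congr rfl fun y _ => (Finset.mul_sum _ _ _).symm
          _ ≤ ∑ y, K x y * 1 := by
              refine Finset.sum_le_sum fun y _ => ?_
              exact mul_le_mul_of_nonneg_left (ih y) (hK0 x y)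
          _ = 1 := by simp [hK1 x]
end Generic

section Generic2
variable {X : Type*} [Fintype X] [DecidableEq X] {K : X → X → ℝ} {A : Finset X}
  {Inv : X → Prop} {f : X → ℝ}

lemma partial_sum_le
    (hK0 : ∀ x y, 0 ≤ K x y) (hK1 : ∀ x, ∑ y, K x y = 1)
    (hInv : ∀ x y, Inv x → K x y ≠ 0 → Inv y)
    (hf0 : ∀ x, Inv x → 0 ≤ f x)
    (hfs : ∀ x, Inv x → x ∉ A → 1 + ∑ y, K x y * f y ≤ f x) :
    ∀ T (x : X), Inv x → ∑ t ∈ Finset.range T, (t : ℝ) * hp K A t x ≤ f x := by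
  intro T
  induction T with
  | zero => intro x hx; simpa using hf0 x hx
  | succ T ih =>
      intro x hx
      by_cases hxA : x ∈ A
      · have h1 : ∀ t, hp K A (t+1) x = 0 := fun t => by rw [hp]; simp [hxA]
        have : ∀ t ∈ Finset.range (T+1), (t : ℝ) * hp K A t x = 0 := by
          intro t _
          match t with
          | 0 => simp
          | t+1 => rw [h1]; ring
        rw [Finset.sum_eq_zero this]; exact hf0 x hx
      · rw [Finset.sum_range_succ']
        have h0 : (0:ℝ) * hp K A 0 x = 0 := by ring
        rw [Nat.cast_zero, h0, add_zero]
        have hrec : ∀ t, hp K A (t+1) x = ∑ y, K x y * hp K A t y := fun t => by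
          rw [hp]; simp [hxA]
        calc ∑ t ∈ Finset.range T, ((t+1 : ℕ) : ℝ) * hp K A (t+1) x
            = ∑ t ∈ Finset.range T, ∑ y, K x y * (((t:ℝ)+1) * hp K A t y) := by
              refine Finset.sum_congr rfl fun t _ => ?_
              rw [hrec, Finset.mul_sum]
              push_cast
              exact Finset.sum_congr rfl fun y _ => by ring
          _ = ∑ y, K x y * ∑ t ∈ Finset.range T, ((t:ℝ)+1) * hp K A t y := by
              rw [Finset.sum_comm]
              exact Finset.sum_congr rfl fun y _ => (Finset.mul_sum _ _ _).symm
          _ ≤ ∑ y, K x y * (f y + 1) := by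
              refine Finset.sum_le_sum fun y _ => ?_
              by_cases hKxy : K x y = 0
              · simp [hKxy]
              · have hy : Inv y := hInv x y hx hKxy
                refine mul_le_mul_of_nonneg_left ?_ (hK0 x y)
                have e1 : ∑ t ∈ Finset.range T, ((t:ℝ)+1) * hp K A t y
                    = (∑ t ∈ Finset.range T, (t:ℝ) * hp K A t y)
                      + ∑ t ∈ Finset.range T, hp K A t y := by
                  rw [← Finset.sum_add_distrib]
                  exact Finset.sum_congr rfl fun t _ => by ring
                rw [e1]
                exact add_le_add (ih y hy) (sum_hp_le_one hK0 hK1 T y)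
          _ = 1 + ∑ y, K x y * f y := by
              have : ∀ y, K x y * (f y + 1) = K x y * f y + K x y := fun y => by ring
              simp only [this]
              rw [Finset.sum_add_distrib, hK1 x]; ring
          _ ≤ f x := hfs x hx hxA

lemma efht_le
    (hK0 : ∀ x y, 0 ≤ K x y) (hK1 : ∀ x, ∑ y, K x y = 1)
    (hInv : ∀ x y, Inv x → K x y ≠ 0 → Inv y)
    (hf0 : ∀ x, Inv x → 0 ≤ f x)
    (hfs : ∀ x, Inv x → x ∉ A → 1 + ∑ y, K x y * f y ≤ f x)
    {x : X} (hx : Inv x) :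
    efht (fun _ => K) A x ≤ f x := by
  rw [efht]
  have he : ∀ t : ℕ, (t:ℝ) * hitProb (fun _ => K) A 0 t x = (t:ℝ) * hp K A t x := by
    intro t; rw [hitProb_eq_hp]
  rw [tsum_congr he]
  refine Real.tsum_le_of_sum_range_le (fun t => ?_) (fun T => partial_sum_le hK0 hK1 hInv hf0 hfs T x hx)
  exact mul_nonneg (Nat.cast_nonneg t) (hp_nonneg hK0 t x)

end Generic2

section Graph
open Finset SimpleGraph
variable {V : Type*} [Fintype V] [DecidableEq V]
  {G : SimpleGraph V} [DecidableRel G.Adj]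

lemma degree_pos_of_conn (hconn : G.Connected) (hcard : 1 < Fintype.card V) (x : V) :
    0 < G.degree x := by
  rw [G.degree_pos_iff_exists_adj x]
  obtain ⟨y, hy⟩ := Fintype.exists_ne_of_one_lt_card hcard x
  obtain ⟨p⟩ := hconn.preconnected x y
  cases p with
  | nil => exact absurd rfl hy.symm
  | cons h q => exact ⟨_, h⟩

lemma walk_max {g : V → ℝ} {M : ℝ} :
    ∀ {x u : V} (_ : G.Walk x u),
      (∀ z, z ≠ u → (G.degree z : ℝ) * g z = ∑ y ∈ G.neighborFinset z, g y) →
      (∀ z, g z ≤ M) → g x = M → g u = M := by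
  intro x u p
  induction p with
  | nil => exact fun _ _ h => h
  | @cons a b c hab q ih =>
      intro hharm hle ha
      by_cases hau : a = c
      · rw [← hau]; exact ha
      · have hsum : ∑ y ∈ G.neighborFinset a, (M - g y) = 0 := by
          rw [Finset.sum_sub_distrib, ← hharm a hau, ha, Finset.sum_const,
            SimpleGraph.card_neighborFinset_eq_degree, nsmul_eq_mul]
          ring
        have hall : ∀ y ∈ G.neighborFinset a, M - g y = 0 :=
          (Finset.sum_eq_zero_iff_of_nonneg (fun y _ => by linarith [hle y])).1 hsum
        have hb : g b = M := by
          have := hall b (by rwa [SimpleGraph.mem_neighborFinset])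
          linarith
        exact ih hharm hle hb

lemma exists_hitfun (hconn : G.Connected) (hcard : 1 < Fintype.card V) (u : V) :
    ∃ h : V → ℝ, h u = 0 ∧ (∀ x, 0 ≤ h x) ∧
      ∀ x, x ≠ u → (G.degree x : ℝ) * h x = (G.degree x : ℝ) + ∑ y ∈ G.neighborFinset x, h y := by
  classical
  let T : (V → ℝ) →ₗ[ℝ] (V → ℝ) :=
    { toFun := fun g x => if x = u then g u else (G.degree x : ℝ) * g x - ∑ y ∈ G.neighborFinset x, g y
      map_add' := by
        intro g1 g2; funext x
        by_cases hx : x = u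
        · simp [hx]
        · simp only [if_neg hx, Pi.add_apply, Finset.sum_add_distrib]; ring
      map_smul' := by
        intro c g; funext x
        by_cases hx : x = u
        · simp [hx]
        · simp only [if_neg hx, Pi.smul_apply, smul_eq_mul, RingHom.id_apply,
            ← Finset.mul_sum]
          ring }
  have hTinj : Function.Injective T := by
    rw [← LinearMap.ker_eq_bot, LinearMap.ker_eq_bot']
    intro g hg
    have hgu : g u = 0 := by
      have := congrFun hg u
      simpa [T] using this
    have hharm : ∀ z, z ≠ u → (G.degree z : ℝ) * g z = ∑ y ∈ G.neighborFinset z, g y := by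
      intro z hz
      have := congrFun hg z
      simp only [T, LinearMap.coe_mk, AddHom.coe_mk, if_neg hz, Pi.zero_apply] at this
      linarith
    have hle0 : ∀ x, g x ≤ 0 := by
      obtain ⟨x0, -, hx0⟩ := Finset.exists_max_image Finset.univ g ⟨u, Finset.mem_univ u⟩
      intro x
      have hM : g u = g x0 :=
        walk_max (hconn.preconnected x0 u).some hharm (fun z => hx0 z (Finset.mem_univ z)) rfl
      calc g x ≤ g x0 := hx0 x (Finset.mem_univ x)
        _ = g u := hM.symm
        _ = 0 := hgu
    have hge0 : ∀ x, 0 ≤ g x := by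
      obtain ⟨x0, -, hx0⟩ := Finset.exists_min_image Finset.univ g ⟨u, Finset.mem_univ u⟩
      intro x
      have hharm' : ∀ z, z ≠ u → (G.degree z : ℝ) * (-g) z = ∑ y ∈ G.neighborFinset z, (-g) y := by
        intro z hz
        simp only [Pi.neg_apply, Finset.sum_neg_distrib, mul_neg, hharm z hz]
      have hM : (-g) u = (-g) x0 :=
        walk_max (hconn.preconnected x0 u).some hharm'
          (fun z => neg_le_neg (hx0 z (Finset.mem_univ z))) rfl
      have h1 : (-g) x ≤ (-g) x0 := neg_le_neg (hx0 x (Finset.mem_univ x))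
      have h2 : (-g) x0 = (-g) u := hM.symm
      simp only [Pi.neg_apply] at h1 h2
      rw [hgu] at h2
      linarith
    funext x
    exact le_antisymm (hle0 x) (hge0 x)
  have hTsurj : Function.Surjective T := (LinearMap.injective_iff_surjective).1 hTinj
  obtain ⟨h, hh⟩ := hTsurj (fun x => if x = u then 0 else (G.degree x : ℝ))
  have hhu : h u = 0 := by
    have := congrFun hh u
    simpa [T] using this
  have heq : ∀ x, x ≠ u → (G.degree x : ℝ) * h x = (G.degree x : ℝ) + ∑ y ∈ G.neighborFinset x, h y := by
    intro x hx
    have := congrFun hh x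
    simp only [T, LinearMap.coe_mk, AddHom.coe_mk, if_neg hx] at this
    linarith
  refine ⟨h, hhu, ?_, heq⟩
  obtain ⟨x0, -, hx0⟩ := Finset.exists_min_image Finset.univ h ⟨u, Finset.mem_univ u⟩
  intro x
  have hx0nn : 0 ≤ h x0 := by
    by_contra hneg
    push_neg at hneg
    have hx0u : x0 ≠ u := fun e => by rw [e, hhu] at hneg; linarith
    have hdeg : (0:ℝ) < G.degree x0 := by
      exact_mod_cast degree_pos_of_conn hconn hcard x0
    have h1 := heq x0 hx0u
    have h2 : ∑ y ∈ G.neighborFinset x0, h x0 ≤ ∑ y ∈ G.neighborFinset x0, h y :=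
      Finset.sum_le_sum fun y _ => hx0 y (Finset.mem_univ y)
    rw [Finset.sum_const, SimpleGraph.card_neighborFinset_eq_degree, nsmul_eq_mul] at h2
    linarith
  calc (0:ℝ) ≤ h x0 := hx0nn
    _ ≤ h x := hx0 x (Finset.mem_univ x)
end Graph

section Laplacian
open Finset SimpleGraph
variable {V : Type*} [Fintype V] [DecidableEq V]
  {G : SimpleGraph V} [DecidableRel G.Adj]

/-- graph Laplacian applied to f -/
def Lap (G : SimpleGraph V) [DecidableRel G.Adj] (f : V → ℝ) (x : V) : ℝ :=
  (G.degree x : ℝ) * f x - ∑ y ∈ G.neighborFinset x, f y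

lemma sum_nbr_swap (f : V → ℝ) :
    ∑ x, ∑ y ∈ G.neighborFinset x, f y = ∑ y, (G.degree y : ℝ) * f y := by
  have e1 : ∀ x : V, ∑ y ∈ G.neighborFinset x, f y
      = ∑ y, if G.Adj x y then f y else 0 := fun x => by
    simp [neighborFinset_eq_filter, Finset.sum_filter]
  have e2 : ∀ y : V, ∑ x, (if G.Adj x y then f y else 0)
      = (G.degree y : ℝ) * f y := fun y => by
    rw [← Finset.sum_filter]
    have : Finset.univ.filter (fun x => G.Adj x y) = G.neighborFinset y := by
      ext z
      simp [SimpleGraph.adj_comm]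
    rw [this, Finset.sum_const, SimpleGraph.card_neighborFinset_eq_degree, nsmul_eq_mul]
  simp only [e1]
  rw [Finset.sum_comm]
  exact Finset.sum_congr rfl fun y _ => e2 y

lemma sum_Lap_eq_zero (f : V → ℝ) : ∑ x, Lap G f x = 0 := by
  unfold Lap
  rw [Finset.sum_sub_distrib, sum_nbr_swap]
  ring

lemma quad_identity (f : V → ℝ) :
    2 * ∑ x, f x * Lap G f x = ∑ x, ∑ y ∈ G.neighborFinset x, (f x - f y)^2 := by
  have expand : ∀ x : V, ∑ y ∈ G.neighborFinset x, (f x - f y)^2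
      = (G.degree x : ℝ) * (f x)^2 - 2 * (f x * ∑ y ∈ G.neighborFinset x, f y)
        + ∑ y ∈ G.neighborFinset x, (f y)^2 := by
    intro x
    have e0 : ∑ y ∈ G.neighborFinset x, (f x - f y)^2
        = ∑ y ∈ G.neighborFinset x, ((f x)^2 - 2*(f x * f y) + (f y)^2) :=
      Finset.sum_congr rfl fun y _ => by ring
    rw [e0, Finset.sum_add_distrib, Finset.sum_sub_distrib, Finset.sum_const,
      SimpleGraph.card_neighborFinset_eq_degree, nsmul_eq_mul]
    have e1 : ∑ y ∈ G.neighborFinset x, 2*(f x * f y)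
        = 2 * (f x * ∑ y ∈ G.neighborFinset x, f y) := by
      rw [Finset.mul_sum, Finset.mul_sum]
    rw [e1]
  simp only [expand]
  rw [Finset.sum_add_distrib, Finset.sum_sub_distrib]
  have e2 : ∑ x, ∑ y ∈ G.neighborFinset x, (f y)^2
      = ∑ x : V, (G.degree x : ℝ) * (f x)^2 := sum_nbr_swap _
  rw [e2]
  have e3 : ∑ x : V, f x * Lap G f x
      = ∑ x : V, ((G.degree x : ℝ) * (f x)^2 - f x * ∑ y ∈ G.neighborFinset x, f y) :=
    Finset.sum_congr rfl fun x _ => by unfold Lap; ring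
  have e4 : ∑ x : V, 2 * (f x * ∑ y ∈ G.neighborFinset x, f y)
      = 2 * ∑ x : V, (f x * ∑ y ∈ G.neighborFinset x, f y) := (Finset.mul_sum _ _ _).symm
  rw [e3, e4, Finset.sum_sub_distrib]
  ring

lemma pair_le_quad {f : V → ℝ} {a b : V} (hab : G.Adj a b) :
    (f a - f b)^2 ≤ ∑ x, f x * Lap G f x := by
  have hq := quad_identity (G := G) f
  have hsub : ({a, b} : Finset V) ⊆ Finset.univ := Finset.subset_univ _
  have hne : a ≠ b := G.ne_of_adj hab
  have hbig : ∑ x ∈ ({a, b} : Finset V), ∑ y ∈ G.neighborFinset x, (f x - f y)^2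
      ≤ ∑ x, ∑ y ∈ G.neighborFinset x, (f x - f y)^2 := by
    refine Finset.sum_le_sum_of_subset_of_nonneg hsub fun x _ _ => ?_
    exact Finset.sum_nonneg fun y _ => sq_nonneg _
  rw [Finset.sum_pair hne] at hbig
  have ha : (f a - f b)^2 ≤ ∑ y ∈ G.neighborFinset a, (f a - f y)^2 :=
    Finset.single_le_sum (f := fun y => (f a - f y)^2) (fun y _ => sq_nonneg _)
      ((SimpleGraph.mem_neighborFinset _ _ _).2 hab)
  have hb : (f b - f a)^2 ≤ ∑ y ∈ G.neighborFinset b, (f b - f y)^2 :=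
    Finset.single_le_sum (f := fun y => (f b - f y)^2) (fun y _ => sq_nonneg _)
      ((SimpleGraph.mem_neighborFinset _ _ _).2 hab.symm)
  nlinarith [sq_nonneg (f a - f b)]

/-- commute time bound across an edge -/
lemma commute_le {a b : V} (hconn : G.Connected) (hcard : 1 < Fintype.card V)
    (hab : G.Adj a b)
    {ha : V → ℝ} (hha0 : ha a = 0) (hhann : ∀ x, 0 ≤ ha x)
    (hhaeq : ∀ x, x ≠ a → (G.degree x : ℝ) * ha x = (G.degree x : ℝ) + ∑ y ∈ G.neighborFinset x, ha y)
    {hb : V → ℝ} (hhb0 : hb b = 0) (hhbnn : ∀ x, 0 ≤ hb x)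
    (hhbeq : ∀ x, x ≠ b → (G.degree x : ℝ) * hb x = (G.degree x : ℝ) + ∑ y ∈ G.neighborFinset x, hb y) :
    hb a + ha b ≤ 2 * (G.edgeFinset.card : ℝ) := by
  classical
  set m2 : ℝ := 2 * (G.edgeFinset.card : ℝ) with hm2
  have hsumdeg : ∑ x, (G.degree x : ℝ) = m2 := by
    rw [hm2]
    exact_mod_cast congrArg (Nat.cast : ℕ → ℝ) G.sum_degrees_eq_twice_card_edges
  have hne : a ≠ b := G.ne_of_adj hab
  set w : V → ℝ := fun x => hb x - ha x with hw
  -- Lap of w off {a,b} is 0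
  have hLw : ∀ x, x ≠ a → x ≠ b → Lap G w x = 0 := by
    intro x hxa hxb
    unfold Lap
    simp only [hw, Finset.sum_sub_distrib, mul_sub]
    have e1 := hhaeq x hxa
    have e2 := hhbeq x hxb
    linarith
  -- Lap at a
  have hLa : Lap G w a = m2 := by
    have e2 := hhbeq a (hne)
    have e1 : Lap G ha a = (G.degree a : ℝ) - m2 := by
      have hz := sum_Lap_eq_zero (G := G) ha
      have : ∀ x ∈ (Finset.univ.erase a), Lap G ha x = (G.degree x : ℝ) := by
        intro x hx
        have hxa := Finset.ne_of_mem_erase hx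
        unfold Lap
        linarith [hhaeq x hxa]
      have hsplit : ∑ x, Lap G ha x = Lap G ha a + ∑ x ∈ Finset.univ.erase a, Lap G ha x :=
        (Finset.add_sum_erase _ _ (Finset.mem_univ a)).symm
      rw [Finset.sum_congr rfl this] at hsplit
      have hers : ∑ x ∈ Finset.univ.erase a, (G.degree x : ℝ)
          = m2 - (G.degree a : ℝ) := by
        have := Finset.add_sum_erase Finset.univ (fun x => (G.degree x : ℝ)) (Finset.mem_univ a)
        rw [hsumdeg] at this
        linarith
      rw [hers, hz] at hsplit
      linarith
    have e3 : Lap G hb a = (G.degree a : ℝ) := by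
      unfold Lap; linarith
    have : Lap G w a = Lap G hb a - Lap G ha a := by
      unfold Lap
      simp only [hw, Finset.sum_sub_distrib, mul_sub]
      ring
    rw [this, e3, e1]; ring
  have hLb : Lap G w b = -m2 := by
    have e1 : Lap G hb b = (G.degree b : ℝ) - m2 := by
      have hz := sum_Lap_eq_zero (G := G) hb
      have : ∀ x ∈ (Finset.univ.erase b), Lap G hb x = (G.degree x : ℝ) := by
        intro x hx
        have hxb := Finset.ne_of_mem_erase hx
        unfold Lap
        linarith [hhbeq x hxb]
      have hsplit : ∑ x, Lap G hb x = Lap G hb b + ∑ x ∈ Finset.univ.erase b, Lap G hb x :=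
        (Finset.add_sum_erase _ _ (Finset.mem_univ b)).symm
      rw [Finset.sum_congr rfl this] at hsplit
      have hers : ∑ x ∈ Finset.univ.erase b, (G.degree x : ℝ)
          = m2 - (G.degree b : ℝ) := by
        have := Finset.add_sum_erase Finset.univ (fun x => (G.degree x : ℝ)) (Finset.mem_univ b)
        rw [hsumdeg] at this
        linarith
      rw [hers, hz] at hsplit
      linarith
    have e3 : Lap G ha b = (G.degree b : ℝ) := by
      unfold Lap; linarith [hhaeq b hne.symm]
    have : Lap G w b = Lap G hb b - Lap G ha b := by
      unfold Lap
      simp only [hw, Finset.sum_sub_distrib, mul_sub]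
      ring
    rw [this, e1, e3]; ring
  -- energy
  have henergy : ∑ x, w x * Lap G w x = m2 * (w a - w b) := by
    have : ∀ x ∈ Finset.univ.erase a |>.erase b, w x * Lap G w x = 0 := by
      intro x hx
      have hxb := Finset.ne_of_mem_erase hx
      have hxa := Finset.ne_of_mem_erase (Finset.mem_of_mem_erase hx)
      rw [hLw x hxa hxb]; ring
    have hsplit : ∑ x, w x * Lap G w x
        = w a * Lap G w a + (w b * Lap G w b
          + ∑ x ∈ (Finset.univ.erase a |>.erase b), w x * Lap G w x) := by
      have h1 : ∑ x, w x * Lap G w x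
          = w a * Lap G w a + ∑ x ∈ Finset.univ.erase a, w x * Lap G w x :=
        (Finset.add_sum_erase _ _ (Finset.mem_univ a)).symm
      have h2 : ∑ x ∈ Finset.univ.erase a, w x * Lap G w x
          = w b * Lap G w b + ∑ x ∈ (Finset.univ.erase a |>.erase b), w x * Lap G w x :=
        (Finset.add_sum_erase _ _ (Finset.mem_erase.2 ⟨hne.symm, Finset.mem_univ b⟩)).symm
      rw [h1, h2]
    rw [Finset.sum_eq_zero this, add_zero] at hsplit
    rw [hsplit, hLa, hLb]; ring
  have hpair : (w a - w b)^2 ≤ m2 * (w a - w b) := by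
    rw [← henergy]
    exact pair_le_quad hab
  have hwab : w a - w b = hb a + ha b := by
    simp only [hw, hha0, hhb0]; ring
  rw [hwab] at hpair
  have hc0 : 0 ≤ hb a + ha b := by
    have := hhann b; have := hhbnn a; linarith
  nlinarith
end Laplacian

section Walks
open Finset SimpleGraph
variable {V : Type*} [Fintype V] [DecidableEq V]
  {G : SimpleGraph V} [DecidableRel G.Adj]

lemma exists_boundary (hconn : G.Connected) {S : Finset V} (hne : S.Nonempty)
    (hns : ∃ u, u ∉ S) : ∃ x y, x ∈ S ∧ y ∉ S ∧ G.Adj x y := by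
  obtain ⟨a, ha⟩ := hne
  obtain ⟨u, hu⟩ := hns
  obtain ⟨p⟩ := hconn.preconnected a u
  clear hconn
  induction p with
  | nil => exact absurd ha hu
  | @cons a b c hab q ih =>
      by_cases hb : b ∈ S
      · exact ih hb hu
      · exact ⟨a, b, ha, hb, hab⟩

variable (c : V → V → ℝ)

/-- cost of a path (as list of vertices) -/
def lcost : List V → ℝ
  | [] => 0
  | [_] => 0
  | x :: y :: t => c x y + lcost (y :: t)

lemma lcost_append (x : V) : ∀ (l1 l2 : List V),
    lcost c (l1 ++ x :: l2) = lcost c (l1 ++ [x]) + lcost c (x :: l2) := by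
  intro l1
  induction l1 with
  | nil => intro l2; simp [lcost]
  | cons a t ih =>
      intro l2
      match t with
      | [] => simp [lcost]
      | b :: t' =>
          have h1 : (a :: b :: t') ++ x :: l2 = a :: ((b :: t') ++ x :: l2) := rfl
          have h2 : (a :: b :: t') ++ [x] = a :: ((b :: t') ++ [x]) := rfl
          rw [h1, h2]
          show c a b + lcost c ((b :: t') ++ x :: l2)
              = (c a b + lcost c ((b :: t') ++ [x])) + lcost c (x :: l2)
          rw [ih l2]
          ring

variable {c} in
lemma cover_extend {M : ℝ} (hconn : G.Connected) (hM : 0 ≤ M)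
    (hcomm : ∀ x y, G.Adj x y → c x y + c y x ≤ 2 * M) :
    ∀ (k : ℕ) (l : List V), l ≠ [] → List.Chain' G.Adj l →
      (Finset.univ \ l.toFinset).card ≤ k →
      ∃ l' : List V, l'.head? = l.head? ∧ List.Chain' G.Adj l' ∧ (∀ x : V, x ∈ l') ∧
        lcost c l' ≤ lcost c l + 2 * M * k := by
  intro k
  induction k with
  | zero =>
      intro l hl hchain hcard
      refine ⟨l, rfl, hchain, fun x => ?_, by simp⟩
      have : (Finset.univ \ l.toFinset) = ∅ := Finset.card_eq_zero.1 (Nat.le_zero.1 hcard)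
      have hx : x ∈ l.toFinset := by
        by_contra hx
        have hmem : x ∈ Finset.univ \ l.toFinset := Finset.mem_sdiff.2 ⟨Finset.mem_univ x, hx⟩
        rw [this] at hmem
        simp at hmem
      exact List.mem_toFinset.1 hx
  | succ k ih =>
      intro l hl hchain hcard
      by_cases hcov : ∀ x : V, x ∈ l
      · refine ⟨l, rfl, hchain, hcov, ?_⟩
        have : (0:ℝ) ≤ 2 * M * (k+1:ℕ) := by positivity
        linarith
      · push_neg at hcov
        obtain ⟨u, hu⟩ := hcov
        have huS : u ∉ l.toFinset := fun h => hu (List.mem_toFinset.1 h)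
        have hSne : l.toFinset.Nonempty := by
          match l, hl with
          | a :: t, _ => exact ⟨a, by simp⟩
        obtain ⟨x, y, hxS, hyS, hxy⟩ := exists_boundary hconn hSne ⟨u, huS⟩
        obtain ⟨l1, l2, hsplit⟩ := List.append_of_mem (List.mem_toFinset.1 hxS)
        set l' : List V := l1 ++ x :: y :: x :: l2 with hl'
        have hhead : l'.head? = l.head? := by
          rw [hsplit, hl']
          cases l1 <;> rfl
        have hchain' : List.Chain' G.Adj l' := by
          rw [hsplit] at hchain
          simp only [List.Chain'] at hchain ⊢
          rw [List.isChain_append] at hchain ⊢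
          obtain ⟨c1, c2, c3⟩ := hchain
          refine ⟨c1, ?_, ?_⟩
          · rw [List.isChain_cons_cons, List.isChain_cons_cons]
            exact ⟨hxy, hxy.symm, c2⟩
          · intro z hz w hw
            refine c3 z hz w ?_
            simpa using hw
        have htf : l'.toFinset = insert y l.toFinset := by
          rw [hsplit, hl']
          ext z
          simp only [List.toFinset_append, List.toFinset_cons, Finset.mem_union,
            Finset.mem_insert, List.mem_toFinset]
          tauto
        have hcard' : (Finset.univ \ l'.toFinset).card ≤ k := by
          rw [htf]
          have h1 : Finset.univ \ insert y l.toFinset = (Finset.univ \ l.toFinset).erase y := by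
            ext z
            simp only [Finset.mem_sdiff, Finset.mem_univ, Finset.mem_insert, Finset.mem_erase,
              true_and]
            tauto
          rw [h1]
          have hy' : y ∈ Finset.univ \ l.toFinset := Finset.mem_sdiff.2 ⟨Finset.mem_univ y, hyS⟩
          have := Finset.card_erase_of_mem hy'
          omega
        have hcost' : lcost c l' ≤ lcost c l + 2 * M := by
          have e1 : lcost c l' = lcost c (l1 ++ [x]) + lcost c (x :: y :: x :: l2) := by
            rw [hl', lcost_append]
          have e2 : lcost c l = lcost c (l1 ++ [x]) + lcost c (x :: l2) := by
            rw [hsplit, lcost_append]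
          have e3 : lcost c (x :: y :: x :: l2) = c x y + (c y x + lcost c (x :: l2)) := rfl
          have := hcomm x y hxy
          rw [e1, e2, e3]
          linarith
        have hl'ne : l' ≠ [] := by
          rw [hl']
          cases l1 <;> simp
        obtain ⟨l'', h1, h2, h3, h4⟩ := ih l' hl'ne hchain' hcard'
        refine ⟨l'', by rw [h1, hhead], h2, h3, ?_⟩
        push_cast
        push_cast at h4
        linarith
end Walks

section Assemble
open Finset SimpleGraph
variable {V : Type*} [Fintype V] [DecidableEq V]
  {G : SimpleGraph V} [DecidableRel G.Adj]

lemma lcost_eq_sum (c : V → V → ℝ) (d : V) : ∀ l : List V,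
    lcost c l = ∑ i ∈ Finset.range (l.length - 1), c (l.getD i d) (l.getD (i+1) d) := by
  intro l
  induction l with
  | nil => simp [lcost]
  | cons a t ih =>
      match t, ih with
      | [], _ => simp [lcost]
      | b :: t', ih =>
          show c a b + lcost c (b :: t') = _
          rw [ih]
          have hlen : (a :: b :: t').length - 1 = ((b :: t').length - 1) + 1 := by
            simp
          rw [hlen, Finset.sum_range_succ']
          simp only [List.getD_cons_succ, List.getD_cons_zero]
          ring

lemma coverKernel_sum (x : V) (S : Finset V) (g : V × Finset V → ℝ) :
    ∑ q, coverKernel G (x, S) q * g q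
      = ∑ y ∈ G.neighborFinset x, (1/(G.degree x : ℝ)) * g (y, insert y S) := by
  rw [Fintype.sum_prod_type]
  have e1 : ∀ y : V, ∑ T : Finset V, coverKernel G (x, S) (y, T) * g (y, T)
      = if G.Adj x y then (1/(G.degree x : ℝ)) * g (y, insert y S) else 0 := by
    intro y
    have e2 : ∀ T : Finset V, coverKernel G (x, S) (y, T) * g (y, T)
        = if T = insert y S then
            (if G.Adj x y then (1/(G.degree x : ℝ)) * g (y, T) else 0) else 0 := by
      intro T
      unfold coverKernel
      by_cases h1 : G.Adj x y <;> by_cases h2 : T = insert y S <;> simp [h1, h2]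
    rw [Finset.sum_congr rfl fun T _ => e2 T, Finset.sum_ite_eq' Finset.univ (insert y S)]
    simp
  rw [Finset.sum_congr rfl fun y _ => e1 y, ← Finset.sum_filter,
    ← SimpleGraph.neighborFinset_eq_filter]

lemma cover_super (hconn : G.Connected) (hcard : 1 < Fintype.card V) (v : V)
    (H : V → V → ℝ)
    (hH0 : ∀ u, H u u = 0) (hHnn : ∀ u x, 0 ≤ H u x)
    (hHeq : ∀ u x, x ≠ u →
      (G.degree x : ℝ) * H u x = (G.degree x : ℝ) + ∑ y ∈ G.neighborFinset x, H u y)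
    (L : ℕ) (w : ℕ → V) (hw0 : w 0 = v)
    (hcover : ∀ x : V, ∃ i, i ≤ L ∧ w i = x) :
    efht (fun _ => coverKernel G)
        (Finset.univ.filter (fun s : V × Finset V => s.2 = Finset.univ)) (v, {v})
      ≤ ∑ i ∈ Finset.range L, H (w (i+1)) (w i) := by
  classical
  have hdeg : ∀ x : V, (0:ℝ) < (G.degree x : ℝ) := fun x => by
    exact_mod_cast degree_pos_of_conn hconn hcard x
  set I : Finset V → Finset ℕ := fun S =>
    (Finset.range (L+1)).filter (fun i => ∀ x : V, x ∉ S → ∃ j, i ≤ j ∧ j ≤ L ∧ w j = x)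
    with hIdef
  set C : ℕ → ℝ := fun i => ∑ j ∈ Finset.Ico i L, H (w (j+1)) (w j) with hCdef
  set φ : V → ℕ → ℝ := fun x i => H (w i) x + C i with hφdef
  have hmemI : ∀ (S : Finset V) (i : ℕ), i ∈ I S ↔
      (i ≤ L ∧ ∀ x : V, x ∉ S → ∃ j, i ≤ j ∧ j ≤ L ∧ w j = x) := by
    intro S i
    rw [hIdef]
    simp only [Finset.mem_filter, Finset.mem_range, Nat.lt_succ_iff, Finset.mem_univ, true_and]
  have hI0 : ∀ S : Finset V, 0 ∈ I S := by
    intro S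
    rw [hmemI]
    exact ⟨Nat.zero_le L, fun x _ => by
      obtain ⟨i, hi1, hi2⟩ := hcover x
      exact ⟨i, Nat.zero_le i, hi1, hi2⟩⟩
  set F : V × Finset V → ℝ := fun p => ((I p.2).image (φ p.1)).min'
    ⟨φ p.1 0, Finset.mem_image_of_mem _ (hI0 p.2)⟩ with hFdef
  have hFle : ∀ (x : V) (S : Finset V) (i : ℕ), i ∈ I S → F (x, S) ≤ φ x i := by
    intro x S i hi
    exact Finset.min'_le _ _ (Finset.mem_image_of_mem _ hi)
  have hFmem : ∀ (x : V) (S : Finset V), ∃ i ∈ I S, F (x, S) = φ x i := by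
    intro x S
    have := Finset.min'_mem ((I S).image (φ x))
      ⟨φ x 0, Finset.mem_image_of_mem _ (hI0 S)⟩
    rw [Finset.mem_image] at this
    obtain ⟨i, hi, he⟩ := this
    exact ⟨i, hi, he.symm⟩
  have hCnn : ∀ i, 0 ≤ C i := fun i => Finset.sum_nonneg fun j _ => hHnn _ _
  have hφnn : ∀ (x : V) (i : ℕ), 0 ≤ φ x i := fun x i => add_nonneg (hHnn _ _) (hCnn i)
  have hF0 : ∀ p : V × Finset V, 0 ≤ F p := by
    intro p
    obtain ⟨i, hi, he⟩ := hFmem p.1 p.2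
    rw [← Prod.mk.eta (p := p), he]
    exact hφnn _ _
  have hImono : ∀ S S' : Finset V, S ⊆ S' → I S ⊆ I S' := by
    intro S S' hss i hi
    rw [hmemI] at hi ⊢
    exact ⟨hi.1, fun x hx => hi.2 x (fun hmem => hx (hss hmem))⟩
  have hshift : ∀ (x : V) (S : Finset V), x ∈ S → S ≠ Finset.univ →
      ∃ j ∈ I S, F (x, S) = φ x j ∧ x ≠ w j := by
    intro x S hxS hSu
    obtain ⟨z, hz⟩ : ∃ z : V, z ∉ S := by
      by_contra hzz
      push_neg at hzz
      exact hSu (Finset.eq_univ_iff_forall.2 hzz)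
    have hzx : z ≠ x := fun e => hz (e ▸ hxS)
    have key : ∀ (dlt j : ℕ), j ∈ I S → L - j ≤ dlt → F (x, S) = φ x j →
        ∃ j' ∈ I S, F (x, S) = φ x j' ∧ x ≠ w j' := by
      intro dlt
      induction dlt with
      | zero =>
          intro j hj hle he
          refine ⟨j, hj, he, fun hxw => ?_⟩
          rw [hmemI] at hj
          obtain ⟨jz, hjz1, hjz2, hjz3⟩ := hj.2 z hz
          have : jz ≠ j := fun e => hzx (by rw [← hjz3, e, ← hxw])
          omega
      | succ dlt ih =>
          intro j hj hle he
          by_cases hxw : x = w j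
          · rw [hmemI] at hj
            obtain ⟨jz, hjz1, hjz2, hjz3⟩ := hj.2 z hz
            have hjzj : jz ≠ j := fun e => hzx (by rw [← hjz3, e, ← hxw])
            have hjL : j < L := by omega
            have hj1 : j + 1 ∈ I S := by
              rw [hmemI]
              refine ⟨hjL, fun x' hx' => ?_⟩
              obtain ⟨jx, hjx1, hjx2, hjx3⟩ := hj.2 x' hx'
              have : jx ≠ j := fun e => hx' (by rw [← hjx3, e, ← hxw]; exact hxS)
              exact ⟨jx, by omega, hjx2, hjx3⟩
            have hCsplit : C j = H (w (j+1)) (w j) + C (j+1) := by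
              rw [hCdef]
              exact Finset.sum_eq_sum_Ico_succ_bot hjL _
            have hφeq : φ x j = φ x (j+1) := by
              rw [hφdef]
              simp only
              rw [hCsplit, ← hxw, hH0]
              ring
            exact ih (j+1) hj1 (by omega) (he.trans hφeq)
          · exact ⟨j, hj, he, hxw⟩
    obtain ⟨j0, hj0, he0⟩ := hFmem x S
    exact key (L - j0) j0 hj0 le_rfl he0
  -- supersolution property
  have hsuper : ∀ (x : V) (S : Finset V), x ∈ S → S ≠ Finset.univ →
      1 + ∑ q, coverKernel G (x, S) q * F q ≤ F (x, S) := by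
    intro x S hxS hSu
    rw [coverKernel_sum]
    obtain ⟨j, hjI, hFe, hxwj⟩ := hshift x S hxS hSu
    have hd := hdeg x
    have heq := hHeq (w j) x hxwj
    have step1 : ∑ y ∈ G.neighborFinset x, (1/(G.degree x : ℝ)) * F (y, insert y S)
        ≤ ∑ y ∈ G.neighborFinset x, (1/(G.degree x : ℝ)) * φ y j := by
      refine Finset.sum_le_sum fun y _ => ?_
      refine mul_le_mul_of_nonneg_left ?_ (by positivity)
      exact hFle y (insert y S) j
        (hImono S (insert y S) (Finset.subset_insert y S) hjI)
    have step2 : ∑ y ∈ G.neighborFinset x, (1/(G.degree x : ℝ)) * φ y j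
        = H (w j) x - 1 + C j := by
      have hsum : ∑ y ∈ G.neighborFinset x, φ y j
          = (G.degree x : ℝ) * H (w j) x - (G.degree x : ℝ)
            + (G.degree x : ℝ) * C j := by
        rw [hφdef]
        simp only
        rw [Finset.sum_add_distrib, Finset.sum_const,
          SimpleGraph.card_neighborFinset_eq_degree, nsmul_eq_mul]
        linarith
      rw [← Finset.mul_sum, hsum]
      field_simp
    rw [hFe]
    have hφx : φ x j = H (w j) x + C j := by rw [hφdef]
    rw [hφx]
    linarith
  -- apply the generic bound
  have hK0 : ∀ p q : V × Finset V, 0 ≤ coverKernel G p q := by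
    intro p q
    unfold coverKernel
    split
    · positivity
    · exact le_rfl
  have hK1 : ∀ p : V × Finset V, ∑ q, coverKernel G p q = 1 := by
    intro p
    have e1 : ∀ q : V × Finset V, coverKernel G p q
        = coverKernel G (p.1, p.2) q * (fun _ : V × Finset V => (1:ℝ)) q := by
      intro q; simp
    rw [Finset.sum_congr rfl fun q _ => e1 q, coverKernel_sum]
    rw [Finset.sum_const, SimpleGraph.card_neighborFinset_eq_degree, nsmul_eq_mul]
    have hd := hdeg p.1
    field_simp
  have hInv : ∀ p q : V × Finset V, p.1 ∈ p.2 → coverKernel G p q ≠ 0 → q.1 ∈ q.2 := by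
    intro p q _ hne
    unfold coverKernel at hne
    by_cases hc : G.Adj p.1 q.1 ∧ q.2 = insert q.1 p.2
    · rw [hc.2]
      exact Finset.mem_insert_self _ _
    · rw [if_neg hc] at hne
      exact absurd rfl hne
  have happ := efht_le (K := coverKernel G)
    (A := Finset.univ.filter (fun s : V × Finset V => s.2 = Finset.univ))
    (Inv := fun p => p.1 ∈ p.2) (f := F) hK0 hK1 hInv
    (fun p _ => hF0 p)
    (by
      intro p hp hpA
      have hpu : p.2 ≠ Finset.univ := by
        intro he
        exact hpA (Finset.mem_filter.2 ⟨Finset.mem_univ p, he⟩)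
      have := hsuper p.1 p.2 hp hpu
      calc 1 + ∑ q, coverKernel G p q * F q
          = 1 + ∑ q, coverKernel G (p.1, p.2) q * F q := by rw [Prod.mk.eta]
        _ ≤ F (p.1, p.2) := this
        _ = F p := by rw [Prod.mk.eta])
    (x := (v, ({v} : Finset V))) (Finset.mem_singleton_self v)
  refine happ.trans ?_
  have h1 : F (v, ({v} : Finset V)) ≤ φ v 0 := hFle v {v} 0 (hI0 {v})
  have h2 : φ v 0 = ∑ i ∈ Finset.range L, H (w (i+1)) (w i) := by
    rw [hφdef]
    simp only
    rw [hw0, hH0, hCdef]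
    simp only
    rw [← Finset.range_eq_Ico]
    ring
  rw [h2] at h1
  exact h1
end Assemble

/-- Aleliunas–Karp–Lipton–Lovász–Rackoff cover time bound: for a finite undirected
connected graph `G`, the expected cover time of a simple random walk on `G`
started at any vertex (i.e. the expected number of steps until every vertex has
been visited, which is the expected first hitting time, for the walk recording
its visited vertices, of the states whose visited set is everything) is at most
`2 |E| (|V| - 1)`. -/
theorem cover_time_bound {V : Type*} [Fintype V] [DecidableEq V]
    (G : SimpleGraph V) [DecidableRel G.Adj] (hconn : G.Connected) :
    ∀ v : V,
      efht (fun _ => coverKernel G)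
        (Finset.univ.filter (fun s : V × Finset V => s.2 = Finset.univ))
        (v, {v})
      ≤ 2 * (G.edgeFinset.card : ℝ) * ((Fintype.card V : ℝ) - 1) := by
  intro v
  classical
  set A : Finset (V × Finset V) :=
    Finset.univ.filter (fun s : V × Finset V => s.2 = Finset.univ) with hA
  by_cases hcard : 1 < Fintype.card V
  · -- main case
    set m : ℝ := (G.edgeFinset.card : ℝ) with hm
    have hm0 : 0 ≤ m := by positivity
    -- hitting-time functions
    have hH := fun u : V => Classical.choose_spec (exists_hitfun hconn hcard u)
    set H : V → V → ℝ := fun u => Classical.choose (exists_hitfun hconn hcard u) with hHdef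
    have hH0 : ∀ u, H u u = 0 := fun u => (hH u).1
    have hHnn : ∀ u x, 0 ≤ H u x := fun u x => (hH u).2.1 x
    have hHeq : ∀ u x, x ≠ u →
        (G.degree x : ℝ) * H u x = (G.degree x : ℝ) + ∑ y ∈ G.neighborFinset x, H u y :=
      fun u x hx => (hH u).2.2 x hx
    set c : V → V → ℝ := fun x y => H y x with hcdef
    have hcomm : ∀ x y, G.Adj x y → c x y + c y x ≤ 2 * m := by
      intro x y hxy
      exact commute_le hconn hcard hxy (hH0 x) (hHnn x) (hHeq x)
        (hH0 y) (hHnn y) (hHeq y)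
    -- covering walk
    have hstart : ((Finset.univ : Finset V) \ ([v] : List V).toFinset).card
        ≤ Fintype.card V - 1 := by
      have : ([v] : List V).toFinset = {v} := by simp
      rw [this, Finset.card_sdiff_of_subset (Finset.subset_univ _)]
      simp
    obtain ⟨l, hlhead, hlchain, hlcover, hlcost⟩ :=
      cover_extend (c := c) hconn hm0 hcomm (Fintype.card V - 1) [v]
        (by simp) (List.isChain_singleton v) hstart
    have hlcost' : lcost c l ≤ 2 * m * ((Fintype.card V : ℝ) - 1) := by
      have h0 : lcost c ([v] : List V) = 0 := rfl
      rw [h0, zero_add] at hlcost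
      have : ((Fintype.card V - 1 : ℕ) : ℝ) = (Fintype.card V : ℝ) - 1 := by
        have : 1 ≤ Fintype.card V := by omega
        push_cast [this]
        ring
      rwa [this] at hlcost
    -- index the walk
    obtain ⟨t, rfl⟩ : ∃ t : List V, l = v :: t := by
      match l, hlhead with
      | a :: t, h =>
          simp only [List.head?_cons, List.head?_cons, Option.some.injEq] at h
          exact ⟨t, by rw [h]⟩
    set l : List V := v :: t
    set L : ℕ := l.length - 1 with hL
    set w : ℕ → V := fun i => l.getD i v with hwdef
    have hw0 : w 0 = v := rfl
    have hcover : ∀ x : V, ∃ i, i ≤ L ∧ w i = x := by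
      intro x
      obtain ⟨n, hget⟩ := List.mem_iff_get.1 (hlcover x)
      refine ⟨n.1, by have := n.2; omega, ?_⟩
      rw [hwdef]
      simp only
      rw [List.getD_eq_getElem l v n.2]
      exact hget
    have hcost2 : ∑ i ∈ Finset.range L, H (w (i+1)) (w i)
        ≤ 2 * m * ((Fintype.card V : ℝ) - 1) := by
      have := lcost_eq_sum c v l
      rw [this] at hlcost'
      exact hlcost'
    exact (cover_super hconn hcard v H hH0 hHnn hHeq L w hw0 hcover).trans hcost2
  · -- single vertex case
    have hc1 : Fintype.card V = 1 := by
      have : 0 < Fintype.card V := Fintype.card_pos_iff.2 ⟨v⟩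
      omega
    have huniv : ({v} : Finset V) = Finset.univ := by
      apply Finset.eq_univ_of_card
      simp [hc1]
    have hmem : (v, ({v} : Finset V)) ∈ A := by
      rw [hA]
      exact Finset.mem_filter.2 ⟨Finset.mem_univ _, huniv⟩
    have hzero : ∀ t : ℕ, (t : ℝ) * hitProb (fun _ => coverKernel G) A 0 t (v, {v}) = 0 := by
      intro t
      match t with
      | 0 => simp
      | t + 1 =>
          rw [hitProb_eq_hp]
          rw [hp]
          rw [if_pos hmem]
          ring
    rw [efht, tsum_congr hzero, tsum_zero]
    rw [hc1]
    simp
end
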